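/- Let R be a commutative ring with unity and let A be a commutative unital R-algebra that is a free R-module of finite rank n having an R-basis of the form {1, α, α², ..., α^{n−1}} for some α ∈ A. Let σ and τ be R-algebra endomorphisms of A. Then a (σ,τ)-derivation D : A → A is inner if and only if there exists β ∈ A such that D(α) = β(τ(α) − σ(α)). -/

import Mathlib

/-- Let `A` be a commutative unital `R`-algebra, free of finite rank `n` with an
`R`-basis of the form `{1, α, α², …, α^{n-1}}` for some `α ∈ A`, and let `σ`, `τ` be `R`-algebra
endomorphisms of `A`.  A `(σ,τ)`-derivation `D : A → A` is inner if and only if there exists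
`β ∈ A` with `D α = β * (τ α - σ α)`. -/
theorem stmt5 {R A : Type*} [CommRing R] [CommRing A] [Algebra R A]
    {n : ℕ} (α : A) (b : Module.Basis (Fin n) R A) (hb : ∀ i : Fin n, b i = α ^ (i : ℕ))
    (σ τ : A →ₐ[R] A) (D : A →ₗ[R] A)
    (hD : ∀ x y : A, D (x * y) = D x * τ y + σ x * D y) :
    (∃ β : A, ∀ x : A, D x = β * (τ x - σ x)) ↔
      (∃ β : A, D α = β * (τ α - σ α)) := by
  constructor
  · rintro ⟨β, h⟩; exact ⟨β, h α⟩
  · rintro ⟨β, hβ⟩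
    have hD1 : D 1 = 0 := by
      have := hD 1 1; simpa using this
    have key : ∀ k : ℕ, D (α ^ k) = β * (τ (α ^ k) - σ (α ^ k)) := by
      intro k
      induction k with
      | zero => simp [hD1]
      | succ k ih =>
        rw [pow_succ, hD, ih, hβ, map_mul, map_mul]
        ring
    have hE : D = β • (τ.toLinearMap - σ.toLinearMap) := by
      apply b.ext
      intro i
      simp [hb i, key, mul_sub]
    refine ⟨β, fun x => ?_⟩
    rw [hE]
    simp [mul_sub]
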